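/- Fix a rooted spanning tree T of weighted graph G and let P' = (p_1,…,p_k), ordered root-wards, be edges on one path of T all of which are descendants of all edges of Q' = (q_1,…,q_ℓ), ordered root-wards, on another path of T. Define M[i,j] = weight of the cut determined by {p_i, q_j} (where p_i is a descendant of q_j). Then M[i,j] + M[i+1,j+1] ≥ M[i,j+1] + M[i+1,j] for all valid i,j. -/
import Mathlib


open Finset

/-- Total weight of graph edges with one endpoint in `A` and the other in `B`
(summed over ordered pairs). -/
def betw {V : Type*} [Fintype V] (w : V → V → ℝ) (A B : Finset V) : ℝ :=
  ∑ u ∈ A, ∑ v ∈ B, w u v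

/-- Weight of the cut `(S, V \\ S)`: total weight of edges leaving `S`. -/
def cutw {V : Type*} [Fintype V] [DecidableEq V] (w : V → V → ℝ) (S : Finset V) : ℝ :=
  betw w S Sᶜ

lemma betw_union_left {V : Type*} [Fintype V] [DecidableEq V] (w : V → V → ℝ) {A B : Finset V}
    (h : Disjoint A B) (C : Finset V) :
    betw w (A ∪ B) C = betw w A C + betw w B C := by
  simp [betw, Finset.sum_union h]

lemma betw_union_right {V : Type*} [Fintype V] [DecidableEq V] (w : V → V → ℝ) {A B : Finset V}
    (h : Disjoint A B) (C : Finset V) :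
    betw w C (A ∪ B) = betw w C A + betw w C B := by
  simp [betw, Finset.sum_union h, Finset.sum_add_distrib]

lemma cutw_eq {V : Type*} [Fintype V] [DecidableEq V] (w : V → V → ℝ) (S : Finset V) :
    cutw w S = betw w S univ - betw w S S := by
  have : betw w S S + betw w S Sᶜ = betw w S univ := by
    have := betw_union_right w (disjoint_compl_right : Disjoint S Sᶜ) S
    rw [Finset.union_compl] at this
    linarith
  simp only [cutw]; linarith

lemma cut4 {V : Type*} [Fintype V] [DecidableEq V] (w : V → V → ℝ)
    (hsym : ∀ u v, w u v = w v u) (hnn : ∀ u v, 0 ≤ w u v)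
    (X Y Z : Finset V) (hXY : Disjoint X Y) (hXZ : Disjoint X Z) (hYZ : Disjoint Y Z) :
    cutw w (X ∪ Y ∪ Z) + cutw w X ≤ cutw w (X ∪ Y) + cutw w (X ∪ Z) := by
  have hXY' : Disjoint (X ∪ Y) Z := Finset.disjoint_union_left.2 ⟨hXZ, hYZ⟩
  have hYZnn : 0 ≤ betw w Y Z := Finset.sum_nonneg fun u _ =>
    Finset.sum_nonneg fun v _ => hnn u v
  have hsymYZ : betw w Z Y = betw w Y Z := by
    simp only [betw]
    rw [Finset.sum_comm]
    exact Finset.sum_congr rfl fun u _ => Finset.sum_congr rfl fun v _ => hsym _ _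
  simp only [cutw_eq, betw_union_left w hXY', betw_union_left w hXY,
    betw_union_left w hXZ, betw_union_right w hXY', betw_union_right w hXY,
    betw_union_right w hXZ]
  linarith

/-- Monge condition, descendant case. `P i` is the subtree below the `i`-th
edge of `P'` and `Q j` the subtree below the `j`-th edge of `Q'`, both ordered
root-wards (so both families increase), with every edge of `P'` a descendant of
every edge of `Q'` (so `P i ⊆ Q j`). With `M i j := cutw (Q j \ P i)` the weight
of the cut determined by the pair, `M[i,j] + M[i+1,j+1] ≥ M[i,j+1] + M[i+1,j]`. -/
theorem stmt_8 {V : Type*} [Fintype V] [DecidableEq V] (w : V → V → ℝ)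
    (hsym : ∀ u v, w u v = w v u) (hnn : ∀ u v, 0 ≤ w u v)
    (P Q : ℕ → Finset V) (hP : Monotone P) (hQ : Monotone Q)
    (hPQ : ∀ i j, P i ⊆ Q j) :
    ∀ i j, cutw w (Q (j+1) \ P i) + cutw w (Q j \ P (i+1)) ≤
      cutw w (Q j \ P i) + cutw w (Q (j+1) \ P (i+1)) := by
  intro i j
  have hAB : P i ⊆ P (i+1) := hP (Nat.le_succ i)
  have hBC : P (i+1) ⊆ Q j := hPQ _ _
  have hCD : Q j ⊆ Q (j+1) := hQ (Nat.le_succ j)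
  set X := Q j \ P (i+1) with hX
  set Y := P (i+1) \ P i with hY
  set Z := Q (j+1) \ Q j with hZ
  have hXY : Disjoint X Y := by
    simp only [hX, hY, Finset.disjoint_left]
    intro a ha hb
    exact (Finset.mem_sdiff.1 ha).2 (Finset.mem_sdiff.1 hb).1
  have hXZ : Disjoint X Z := by
    simp only [hX, hZ, Finset.disjoint_left]
    intro a ha hb
    exact (Finset.mem_sdiff.1 hb).2 (Finset.mem_sdiff.1 ha).1
  have hYZ : Disjoint Y Z := by
    simp only [hY, hZ, Finset.disjoint_left]
    intro a ha hb
    exact (Finset.mem_sdiff.1 hb).2 (hBC (Finset.mem_sdiff.1 ha).1)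
  have e1 : Q (j+1) \ P i = X ∪ Y ∪ Z := by
    ext x
    simp only [hX, hY, hZ, Finset.mem_sdiff, Finset.mem_union]
    have h1 := @hAB x; have h2 := @hBC x; have h3 := @hCD x
    tauto
  have e2 : Q j \ P i = X ∪ Y := by
    ext x
    simp only [hX, hY, Finset.mem_sdiff, Finset.mem_union]
    have h1 := @hAB x; have h2 := @hBC x
    tauto
  have e3 : Q (j+1) \ P (i+1) = X ∪ Z := by
    ext x
    simp only [hX, hZ, Finset.mem_sdiff, Finset.mem_union]
    have h2 := @hBC x; have h3 := @hCD x
    tauto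
  rw [e1, e2, e3]
  exact cut4 w hsym hnn X Y Z hXY hXZ hYZ
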